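/- arXiv:1503.02794 — 2 statements merged into one kernel-verified Lean document; each statement's English description precedes it below -/
import Mathlib

section
/- There exists a constant C' > 0 such that for all integers d ≥ 2, all T ≥ 2, and all nonzero k ∈ Z^d, ∫_{S^{d-1}} |∫_0^T e^{2πi t (k·ξ)} dt|² dξ ≤ C' T / ‖k‖. -/
open MeasureTheory Real Metric
open scoped ENNReal Pointwise

lemma gamma_half_lb : ∀ m : ℕ, Real.sqrt π / 2 ≤ Real.Gamma ((m : ℝ) / 2 + 1) := by
  intro m
  induction m using Nat.strong_induction_on with
  | _ m ih =>
    match m, ih with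
    | 0, _ => 
      simp only [Nat.cast_zero, zero_div, zero_add, Real.Gamma_one]
      nlinarith [Real.sq_sqrt pi_pos.le, Real.sqrt_nonneg π, pi_le_four]
    | 1, _ =>
      have h : ((1:ℕ):ℝ)/2 + 1 = 1/2 + 1 := by norm_num
      rw [h, Real.Gamma_add_one (by norm_num), Real.Gamma_one_half_eq]
      nlinarith [Real.sqrt_nonneg π]
    | (n+2), ih =>
      have key : Real.Gamma (((n+2:ℕ):ℝ)/2 + 1) = ((n:ℝ)/2 + 1) * Real.Gamma ((n:ℝ)/2 + 1) := by
        have : ((n+2:ℕ):ℝ)/2 + 1 = ((n:ℝ)/2 + 1) + 1 := by push_cast; ring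
        rw [this, Real.Gamma_add_one (by positivity)]
      rw [key]
      have h1 := ih n (by omega)
      nlinarith [Real.sqrt_nonneg π, Nat.cast_nonneg (α := ℝ) n]

lemma sqrt_pi_le : Real.sqrt π ≤ 1.8 := by
  rw [show (1.8:ℝ) = Real.sqrt (1.8^2) by rw [Real.sqrt_sq]; norm_num]
  exact Real.sqrt_le_sqrt (by nlinarith [pi_lt_d2])

lemma sqrt_pi_ge : (1.7:ℝ) ≤ Real.sqrt π := by
  rw [show (1.7:ℝ) = Real.sqrt (1.7^2) by rw [Real.sqrt_sq]; norm_num]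
  exact Real.sqrt_le_sqrt (by nlinarith [pi_gt_three])

lemma ball_vol_bound : ∀ m : ℕ, ((m : ℝ) + 1) * (Real.sqrt π ^ m / Real.Gamma ((m : ℝ) / 2 + 1)) ≤ 2000 := by
  intro m
  induction m using Nat.strong_induction_on with
  | _ m ih =>
    rcases le_or_gt m 8 with hm | hm
    · have hG : (0.85 : ℝ) ≤ Real.Gamma ((m : ℝ) / 2 + 1) := by
        have := gamma_half_lb m
        nlinarith [sqrt_pi_ge]
      have hnum : ((m : ℝ) + 1) * Real.sqrt π ^ m ≤ 9 * 1.8 ^ 8 := by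
        have h1 : Real.sqrt π ^ m ≤ 1.8 ^ m :=
          pow_le_pow_left₀ (Real.sqrt_nonneg _) sqrt_pi_le m
        have h2 : (1.8:ℝ) ^ m ≤ 1.8 ^ 8 := pow_le_pow_right₀ (by norm_num) hm
        have h3 : ((m:ℝ) + 1) ≤ 9 := by
          have : (m:ℝ) ≤ 8 := by exact_mod_cast hm
          linarith
        have h4 : (0:ℝ) ≤ Real.sqrt π ^ m := by positivity
        nlinarith
      rw [mul_div_assoc'] at *
      calc ((m : ℝ) + 1) * Real.sqrt π ^ m / Real.Gamma ((m : ℝ) / 2 + 1)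
          ≤ (9 * 1.8 ^ 8) / 0.85 := by
            apply div_le_div₀ (by norm_num) hnum (by norm_num) hG
        _ ≤ 2000 := by norm_num
    · obtain ⟨n, rfl⟩ : ∃ n, m = n + 2 := ⟨m - 2, by omega⟩
      have hn7 : (7:ℝ) ≤ (n:ℝ) := by exact_mod_cast (by omega : 7 ≤ n)
      have key : Real.Gamma (((n+2:ℕ):ℝ)/2 + 1) = ((n:ℝ)/2 + 1) * Real.Gamma ((n:ℝ)/2 + 1) := by
        have : ((n+2:ℕ):ℝ)/2 + 1 = ((n:ℝ)/2 + 1) + 1 := by push_cast; ring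
        rw [this, Real.Gamma_add_one (by positivity)]
      have hsq : Real.sqrt π ^ (n+2) = π * Real.sqrt π ^ n := by
        rw [pow_add, sq, Real.mul_self_sqrt pi_pos.le]; ring
      have hG : 0 < Real.Gamma ((n:ℝ)/2 + 1) := Real.Gamma_pos_of_pos (by positivity)
      have hP : (0:ℝ) ≤ Real.sqrt π ^ n := by positivity
      have ihn := ih n (by omega)
      have step : (((n+2:ℕ):ℝ) + 1) * (Real.sqrt π ^ (n+2) / Real.Gamma (((n+2:ℕ):ℝ)/2 + 1))
          ≤ ((n:ℝ) + 1) * (Real.sqrt π ^ n / Real.Gamma ((n:ℝ)/2 + 1)) := by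
        rw [key, hsq]
        push_cast
        rw [mul_div_assoc', mul_div_assoc', div_le_div_iff₀ (by positivity) hG]
        have hlin : 2 * π * ((n:ℝ) + 3) ≤ ((n:ℝ)+1) * ((n:ℝ)+2) := by nlinarith [pi_lt_d2]
        nlinarith [mul_nonneg hP hG.le, mul_le_mul_of_nonneg_right hlin (mul_nonneg hP hG.le)]
      exact le_trans step ihn

lemma norm_lt_one_iff {n : ℕ} (x : EuclideanSpace ℝ (Fin n)) :
    ‖x‖ < 1 ↔ ∑ i, x i ^ 2 < 1 := by
  rw [EuclideanSpace.norm_eq]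
  simp_rw [Real.norm_eq_abs, sq_abs]
  constructor
  · intro h
    have h0 : (0:ℝ) ≤ ∑ i, x i ^ 2 := by positivity
    nlinarith [Real.sq_sqrt h0, Real.sqrt_nonneg (∑ i, x i ^ 2)]
  · intro h
    have h0 : (0:ℝ) ≤ ∑ i, x i ^ 2 := by positivity
    nlinarith [Real.sq_sqrt h0, Real.sqrt_nonneg (∑ i, x i ^ 2)]

lemma slab_vol (n : ℕ) (s : ℝ) (hs : 0 ≤ s) :
    volume {x : EuclideanSpace ℝ (Fin (n + 1)) | |x 0| ≤ s ∧ ‖x‖ < 1}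
      ≤ ENNReal.ofReal (2 * s) * volume (Metric.ball (0 : EuclideanSpace ℝ (Fin n)) 1) := by
  -- pass to the product space
  set S₁ : Set (Fin (n+1) → ℝ) := {y | |y 0| ≤ s ∧ ∑ i, y i ^ 2 < 1} with hS₁
  have hS₁m : MeasurableSet S₁ :=
    (measurableSet_le ((measurable_pi_apply 0).abs) measurable_const).inter
      (measurableSet_lt (Finset.measurable_sum _ fun i _ => (measurable_pi_apply i).pow_const 2)
        measurable_const)
  have h1 : volume {x : EuclideanSpace ℝ (Fin (n + 1)) | |x 0| ≤ s ∧ ‖x‖ < 1}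
      = volume S₁ := by
    rw [← (EuclideanSpace.volume_preserving_symm_measurableEquiv_toLp (Fin (n+1))).measure_preimage
      hS₁m.nullMeasurableSet]
    congr 1
    ext x
    simp only [Set.mem_setOf_eq, Set.mem_preimage, hS₁]
    rw [norm_lt_one_iff]
    rfl
  rw [h1]
  -- split off the first coordinate
  set B₁ : Set (Fin n → ℝ) := {z | ∑ i, z i ^ 2 < 1} with hB₁
  have hB₁m : MeasurableSet B₁ :=
    measurableSet_lt (Finset.measurable_sum _ fun i _ => (measurable_pi_apply i).pow_const 2)
      measurable_const
  have h2 : S₁ ⊆ (MeasurableEquiv.piFinSuccAbove (fun _ => ℝ) 0) ⁻¹'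
      ((Set.Icc (-s) s) ×ˢ B₁) := by
    intro y hy
    obtain ⟨hy1, hy2⟩ := hy
    constructor
    · simpa [abs_le] using hy1
    · simp only [MeasurableEquiv.piFinSuccAbove_apply, hB₁, Set.mem_setOf_eq]
      have := Fin.sum_univ_succAbove (fun i => y i ^ 2) 0
      have h0 : (0:ℝ) ≤ y 0 ^ 2 := sq_nonneg _
      · calc ∑ i, y (Fin.succAbove 0 i) ^ 2 ≤ ∑ i, y i ^ 2 := by rw [this]; nlinarith
          _ < 1 := hy2
  calc volume S₁ ≤ volume ((MeasurableEquiv.piFinSuccAbove (fun _ => ℝ) 0) ⁻¹'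
      ((Set.Icc (-s) s) ×ˢ B₁)) := measure_mono h2
    _ = (volume.prod volume) ((Set.Icc (-s) s) ×ˢ B₁) := by
        rw [(volume_preserving_piFinSuccAbove (fun _ : Fin (n+1) => ℝ) 0).measure_preimage
          ((measurableSet_Icc.prod hB₁m).nullMeasurableSet)]
        rfl
    _ = volume (Set.Icc (-s) s) * volume B₁ := by
        rw [Measure.prod_prod]
    _ ≤ ENNReal.ofReal (2 * s) * volume (Metric.ball (0 : EuclideanSpace ℝ (Fin n)) 1) := by
        apply mul_le_mul'
        · rw [Real.volume_Icc]
          apply ENNReal.ofReal_le_ofReal; linarith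
        · rw [← (EuclideanSpace.volume_preserving_symm_measurableEquiv_toLp (Fin n)).measure_preimage
            hB₁m.nullMeasurableSet]
          apply measure_mono
          intro x hx
          simp only [Set.mem_preimage, hB₁, Set.mem_setOf_eq] at hx
          simp only [mem_ball, dist_zero_right]
          rw [norm_lt_one_iff]
          exact hx

lemma slab_sphere (n : ℕ) (v : EuclideanSpace ℝ (Fin (n + 2))) (hv : ‖v‖ = 1)
    (s : ℝ) (hs : 0 ≤ s) :
    (volume : Measure (EuclideanSpace ℝ (Fin (n + 2)))).toSphere
        {ξ : sphere (0 : EuclideanSpace ℝ (Fin (n + 2))) 1 |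
          |(inner ℝ v (ξ : EuclideanSpace ℝ (Fin (n + 2))) : ℝ)| ≤ s}
      ≤ ENNReal.ofReal (4000 * s) := by
  set A : Set (sphere (0 : EuclideanSpace ℝ (Fin (n + 2))) 1) := {ξ | |(inner ℝ v (ξ : EuclideanSpace ℝ (Fin (n + 2))) : ℝ)| ≤ s} with hA
  have hAm : MeasurableSet A := by
    have : Continuous fun ξ : sphere (0 : EuclideanSpace ℝ (Fin (n + 2))) 1 => |(inner ℝ v (ξ : EuclideanSpace ℝ (Fin (n + 2))) : ℝ)| :=
      (Continuous.inner continuous_const continuous_subtype_val).abs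
    exact measurableSet_le this.measurable measurable_const
  rw [Measure.toSphere_apply' _ hAm]
  set R : EuclideanSpace ℝ (Fin (n + 2)) ≃ₗᵢ[ℝ] EuclideanSpace ℝ (Fin (n + 2)) :=
    Submodule.reflection (Submodule.span ℝ {v - EuclideanSpace.single (0 : Fin (n+2)) (1:ℝ)})ᗮ with hRdef
  have hR : R v = EuclideanSpace.single (0 : Fin (n+2)) (1:ℝ) :=
    Submodule.reflection_sub (by rw [hv, EuclideanSpace.norm_single]; norm_num)
  set W : Set (EuclideanSpace ℝ (Fin (n + 2))) := {x | |x 0| ≤ s ∧ ‖x‖ < 1} with hW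
  have hWm : MeasurableSet W := by
    apply MeasurableSet.inter
    · exact measurableSet_le ((EuclideanSpace.proj (0 : Fin (n+2))).continuous.abs).measurable
        measurable_const
    · exact measurableSet_lt (continuous_norm).measurable measurable_const
  have hsub : Set.Ioo (0:ℝ) 1 • (Subtype.val '' A) ⊆ R ⁻¹' W := by
    rintro z hz
    rw [Set.mem_smul] at hz
    obtain ⟨c, hc, y, ⟨ξ, hξ, rfl⟩, rfl⟩ := hz
    constructor
    · have h1 : (R (c • (ξ : EuclideanSpace ℝ (Fin (n + 2))))) 0 = (inner ℝ (EuclideanSpace.single (0 : Fin (n+2)) (1:ℝ))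
          (R (c • (ξ : EuclideanSpace ℝ (Fin (n + 2))))) : ℝ) := by
        rw [EuclideanSpace.inner_single_left]; simp
      rw [h1, ← hR, LinearIsometryEquiv.inner_map_map, inner_smul_right]
      have hξA : |(inner ℝ v (ξ : EuclideanSpace ℝ (Fin (n + 2))) : ℝ)| ≤ s := hξ
      rw [abs_mul]
      calc |c| * |(inner ℝ v (ξ : EuclideanSpace ℝ (Fin (n + 2))) : ℝ)| ≤ 1 * s := by
            apply mul_le_mul _ hξA (abs_nonneg _) zero_le_one
            rw [abs_of_pos hc.1]; exact hc.2.le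
        _ = s := one_mul s
    · show ‖R (c • (ξ : EuclideanSpace ℝ (Fin (n + 2))))‖ < 1
      rw [R.norm_map, norm_smul, norm_eq_of_mem_sphere ξ]
      simp only [Real.norm_eq_abs, mul_one]
      rw [abs_of_pos hc.1]; exact hc.2
  calc (↑(Module.finrank ℝ (EuclideanSpace ℝ (Fin (n + 2)))) : ℝ≥0∞) * volume (Set.Ioo (0:ℝ) 1 • (Subtype.val '' A))
      ≤ (↑(n+2) : ℝ≥0∞) * volume (R ⁻¹' W) := by
        rw [finrank_euclideanSpace_fin]
        exact mul_le_mul_right (measure_mono hsub) _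
    _ = (↑(n+2) : ℝ≥0∞) * volume W := by
        rw [R.measurePreserving.measure_preimage hWm.nullMeasurableSet]
    _ ≤ (↑(n+2) : ℝ≥0∞) * (ENNReal.ofReal (2 * s) *
          volume (Metric.ball (0 : EuclideanSpace ℝ (Fin (n+1))) 1)) :=
        mul_le_mul_right (slab_vol (n+1) s hs) _
    _ ≤ ENNReal.ofReal (4000 * s) := by
        rw [EuclideanSpace.volume_ball]
        have hcard : (Fintype.card (Fin (n+1))) = n + 1 := Fintype.card_fin _
        rw [hcard]
        have hB : (0:ℝ) ≤ Real.sqrt π ^ (n+1) / Real.Gamma ((↑(n+1):ℝ) / 2 + 1) := by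
          have := Real.Gamma_pos_of_pos (show (0:ℝ) < (↑(n+1):ℝ)/2 + 1 by positivity)
          positivity
        rw [ENNReal.ofReal_one, one_pow, one_mul, ← ENNReal.ofReal_natCast,
          ← ENNReal.ofReal_mul (by positivity), ← ENNReal.ofReal_mul (by positivity)]
        apply ENNReal.ofReal_le_ofReal
        have hbd := ball_vol_bound (n+1)
        push_cast at hbd ⊢
        nlinarith [hbd, hs, hB]

lemma osc_triv (T a : ℝ) (hT : 0 ≤ T) :
    ‖∫ t in (0:ℝ)..T, Complex.exp ((2 * π * Complex.I) * t * (a : ℂ))‖ ≤ T := by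
  have h := intervalIntegral.norm_integral_le_of_norm_le_const
    (C := 1) (f := fun t : ℝ => Complex.exp ((2 * π * Complex.I) * t * (a : ℂ)))
    (a := 0) (b := T) ?_
  · simpa [abs_of_nonneg hT] using h
  · intro t ht
    rw [Complex.norm_exp]
    have : ((2 * π * Complex.I) * t * (a : ℂ)).re = 0 := by
      simp [Complex.mul_re, Complex.mul_im]
    rw [this, Real.exp_zero]

lemma osc_decay (T a : ℝ) (ha : a ≠ 0) :
    ‖∫ t in (0:ℝ)..T, Complex.exp ((2 * π * Complex.I) * t * (a : ℂ))‖ ≤ (π * |a|)⁻¹ := by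
  have hc : (2 * π * Complex.I * (a : ℂ)) ≠ 0 := by
    simp [Complex.ext_iff, pi_ne_zero, ha, Complex.I_ne_zero]
  have heq : ∀ t : ℝ, (2 * π * Complex.I) * t * (a : ℂ)
      = (2 * π * Complex.I * (a : ℂ)) * t := fun t => by ring
  simp_rw [heq]
  rw [integral_exp_mul_complex hc]
  rw [norm_div]
  have hnorm : ‖2 * π * Complex.I * (a : ℂ)‖ = 2 * π * |a| := by
    simp [norm_mul, Complex.norm_real, Real.norm_eq_abs, abs_of_pos pi_pos,
      abs_of_pos (by norm_num : (0:ℝ) < 2)]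
  have hub : ‖Complex.exp (2 * π * Complex.I * (a:ℂ) * (T:ℂ)) -
      Complex.exp (2 * π * Complex.I * (a:ℂ) * (0:ℝ))‖ ≤ 2 := by
    apply le_trans (norm_sub_le _ _)
    have h1 : ∀ s : ℝ, ‖Complex.exp (2 * π * Complex.I * (a:ℂ) * (s:ℂ))‖ = 1 := by
      intro s
      rw [Complex.norm_exp]
      have : (2 * π * Complex.I * (a:ℂ) * (s:ℂ)).re = 0 := by
        simp [Complex.mul_re, Complex.mul_im]
      rw [this, Real.exp_zero]
    rw [h1 T, h1 0]; norm_num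
  rw [hnorm]
  have hπa : 0 < π * |a| := by positivity
  calc ‖Complex.exp (2 * π * Complex.I * (a:ℂ) * (T:ℂ)) -
      Complex.exp (2 * π * Complex.I * (a:ℂ) * (0:ℝ))‖ / (2 * π * |a|)
      ≤ 2 / (2 * π * |a|) := by gcongr
    _ = (π * |a|)⁻¹ := by field_simp

/-- there is `C' > 0` such that for all `d ≥ 2`, `T ≥ 2` and nonzero `k ∈ ℤ^d`,
`∫_{S^{d-1}} |∫_0^T e^{2πit(k·ξ)}dt|² dξ ≤ C' T / ‖k‖`. -/
theorem stmt_6 :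
    ∃ C : ℝ, 0 < C ∧
      ∀ (d : ℕ), 2 ≤ d → ∀ T : ℝ, 2 ≤ T → ∀ k : Fin d → ℤ, k ≠ 0 →
        (∫ ξ : sphere (0 : EuclideanSpace ℝ (Fin d)) 1,
            ‖∫ t in (0:ℝ)..T,
                Complex.exp ((2 * π * Complex.I) * t *
                  ((∑ i, (k i : ℝ) * (ξ : EuclideanSpace ℝ (Fin d)) i : ℝ) : ℂ))‖ ^ 2
          ∂((volume : Measure (EuclideanSpace ℝ (Fin d))).toSphere))
        ≤ C * T / ‖(show EuclideanSpace ℝ (Fin d) from WithLp.toLp 2 (fun i => (k i : ℝ)))‖ := by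
  refine ⟨8000, by norm_num, ?_⟩
  intro d hd T hT k hk
  obtain ⟨n, rfl⟩ : ∃ n, d = n + 2 := ⟨d - 2, by omega⟩
  have hT0 : (0:ℝ) < T := by linarith
  set K : EuclideanSpace ℝ (Fin (n+2)) :=
    (show EuclideanSpace ℝ (Fin (n+2)) from WithLp.toLp 2 (fun i => (k i : ℝ))) with hKdef
  have hK0 : K ≠ 0 := by
    intro h
    apply hk
    funext i
    have := congrArg (fun x : EuclideanSpace ℝ (Fin (n+2)) => x i) h
    simpa [hKdef] using this
  set m := ‖K‖ with hmdef
  have hm : 0 < m := norm_pos_iff.mpr hK0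
  set σ := (volume : Measure (EuclideanSpace ℝ (Fin (n+2)))).toSphere with hσ
  set u : sphere (0 : EuclideanSpace ℝ (Fin (n+2))) 1 → ℝ :=
    fun ξ => (inner ℝ K (ξ : EuclideanSpace ℝ (Fin (n+2))) : ℝ) with hudef
  have hu_cont : Continuous u := (Continuous.inner continuous_const continuous_subtype_val)
  have hsum : ∀ ξ : sphere (0 : EuclideanSpace ℝ (Fin (n+2))) 1,
      (∑ i, (k i : ℝ) * (ξ : EuclideanSpace ℝ (Fin (n+2))) i : ℝ) = u ξ := by
    intro ξ
    simp [hudef, hKdef, PiLp.inner_apply, RCLike.inner_apply, starRingEnd_apply, star_trivial]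
    exact Finset.sum_congr rfl fun i _ => mul_comm _ _
  -- slab estimate for u
  have slab_u : ∀ c : ℝ, 0 ≤ c → σ {ξ | |u ξ| ≤ c} ≤ ENNReal.ofReal (4000 * (c / m)) := by
    intro c hc
    set v : EuclideanSpace ℝ (Fin (n+2)) := m⁻¹ • K with hvdef
    have hv : ‖v‖ = 1 := by
      rw [hvdef, norm_smul, norm_inv, Real.norm_eq_abs, abs_of_pos hm, ← hmdef,
        inv_mul_cancel₀ hm.ne']
    have hseteq : {ξ : sphere (0 : EuclideanSpace ℝ (Fin (n+2))) 1 | |u ξ| ≤ c}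
        = {ξ : sphere (0 : EuclideanSpace ℝ (Fin (n+2))) 1 |
            |(inner ℝ v (ξ : EuclideanSpace ℝ (Fin (n+2))) : ℝ)| ≤ c / m} := by
      ext ξ
      simp only [Set.mem_setOf_eq, hvdef, real_inner_smul_left, abs_mul, abs_inv,
        abs_of_pos hm]
      show |u ξ| ≤ c ↔ m⁻¹ * |(inner ℝ K (ξ : EuclideanSpace ℝ (Fin (n+2))) : ℝ)| ≤ c / m
      have hiu : (inner ℝ K (ξ : EuclideanSpace ℝ (Fin (n+2))) : ℝ) = u ξ := rfl
      rw [hiu, div_eq_mul_inv, mul_comm m⁻¹, mul_le_mul_iff_of_pos_right (inv_pos.mpr hm)]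
    rw [hσ, hseteq]
    exact slab_sphere n v hv (c/m) (div_nonneg hc hm.le)
  -- the dominating function
  set δ : ℝ := (π * T)⁻¹ with hδdef
  have hδ : 0 < δ := by positivity
  set g : sphere (0 : EuclideanSpace ℝ (Fin (n+2))) 1 → ℝ :=
    fun ξ => if |u ξ| ≤ δ then T^2 else ((π * |u ξ|)⁻¹)^2 with hgdef
  have hg_nonneg : ∀ ξ, 0 ≤ g ξ := by
    intro ξ
    simp only [hgdef]
    split_ifs
    · positivity
    · positivity
  have hg_le : ∀ ξ, g ξ ≤ T^2 := by
    intro ξ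
    simp only [hgdef]
    split_ifs with h
    · exact le_refl _
    · push_neg at h
      have hπu : (0:ℝ) < π * |u ξ| := by
        have : (0:ℝ) < |u ξ| := lt_trans hδ h
        positivity
      have h1 : (π * |u ξ|)⁻¹ ≤ T := by
        have h2 : (π * |u ξ|)⁻¹ ≤ (π * δ)⁻¹ := by
          apply inv_anti₀ (by positivity)
          nlinarith [pi_pos]
        have h3 : (π * δ)⁻¹ = T := by
          rw [hδdef]; field_simp
        rw [h3] at h2; exact h2
      exact pow_le_pow_left₀ (by positivity) h1 2
  have hu_meas : Measurable u := hu_cont.measurable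
  have hg_meas : Measurable g := by
    rw [hgdef]
    apply Measurable.ite
    · exact measurableSet_le hu_meas.abs measurable_const
    · exact measurable_const
    · exact ((hu_meas.abs.const_mul π).inv).pow_const 2
  have hg_int : Integrable g σ := by
    apply Integrable.mono' (integrable_const (T^2)) hg_meas.aestronglyMeasurable
    exact ae_of_all _ fun ξ => by
      rw [Real.norm_eq_abs, abs_of_nonneg (hg_nonneg ξ)]; exact hg_le ξ
  -- pointwise bound of the oscillatory integral
  have hfg : ∀ ξ : sphere (0 : EuclideanSpace ℝ (Fin (n+2))) 1,
      ‖∫ t in (0:ℝ)..T, Complex.exp ((2 * π * Complex.I) * t *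
        ((∑ i, (k i : ℝ) * (ξ : EuclideanSpace ℝ (Fin (n+2))) i : ℝ) : ℂ))‖ ^ 2 ≤ g ξ := by
    intro ξ
    rw [hsum ξ]
    simp only [hgdef]
    split_ifs with h
    · exact pow_le_pow_left₀ (norm_nonneg _) (osc_triv T (u ξ) hT0.le) 2
    · push_neg at h
      have hne : u ξ ≠ 0 := by
        intro h0; rw [h0] at h; simp at h; exact absurd h (not_lt.mpr hδ.le)
      exact pow_le_pow_left₀ (norm_nonneg _) (osc_decay T (u ξ) hne) 2
  -- reduce to the integral of g
  have step1 : (∫ ξ : sphere (0 : EuclideanSpace ℝ (Fin (n+2))) 1,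
      ‖∫ t in (0:ℝ)..T, Complex.exp ((2 * π * Complex.I) * t *
        ((∑ i, (k i : ℝ) * (ξ : EuclideanSpace ℝ (Fin (n+2))) i : ℝ) : ℂ))‖ ^ 2 ∂σ)
      ≤ ∫ ξ, g ξ ∂σ :=
    integral_mono_of_nonneg (ae_of_all _ fun ξ => by positivity) hg_int (ae_of_all _ hfg)
  have step2 : ∫ ξ, g ξ ∂σ = (∫⁻ ξ, ENNReal.ofReal (g ξ) ∂σ).toReal :=
    integral_eq_lintegral_of_nonneg_ae (ae_of_all _ hg_nonneg) hg_meas.aestronglyMeasurable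
  have step3 : ∫⁻ ξ, ENNReal.ofReal (g ξ) ∂σ
      = ∫⁻ t in Set.Ioi (0:ℝ), σ {ξ | t < g ξ} :=
    lintegral_eq_lintegral_meas_lt σ (ae_of_all _ hg_nonneg) hg_meas.aemeasurable
  -- distribution function estimate
  set F := fun t : ℝ => (Set.Ioo (0:ℝ) (T^2)).indicator
    (fun t => ENNReal.ofReal (4000 * ((π * Real.sqrt t)⁻¹ / m))) t with hFdef
  have step4 : ∀ t ∈ Set.Ioi (0:ℝ), σ {ξ | t < g ξ} ≤ F t := by
    intro t ht
    rw [Set.mem_Ioi] at ht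
    rcases lt_or_ge t (T^2) with htT | htT
    · have hsub : {ξ : sphere (0 : EuclideanSpace ℝ (Fin (n+2))) 1 | t < g ξ}
          ⊆ {ξ | |u ξ| ≤ (π * Real.sqrt t)⁻¹} := by
        intro ξ hξ
        rw [Set.mem_setOf_eq] at hξ ⊢
        simp only [hgdef] at hξ
        have hst : 0 < Real.sqrt t := Real.sqrt_pos.mpr ht
        split_ifs at hξ with h
        · -- |u ξ| ≤ δ ≤ (π √t)⁻¹
          have hsT : Real.sqrt t < T := by
            have := Real.sqrt_lt_sqrt (le_of_lt ht) htT
            rwa [Real.sqrt_sq hT0.le] at this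
          have : δ ≤ (π * Real.sqrt t)⁻¹ := by
            rw [hδdef]
            apply inv_anti₀ (by positivity)
            nlinarith [pi_pos]
          exact le_trans h this
        · -- t < ((π |u ξ|)⁻¹)^2
          push_neg at h
          have hu0 : 0 < |u ξ| := lt_trans hδ h
          have h2 : Real.sqrt t < (π * |u ξ|)⁻¹ := by
            have := Real.sqrt_lt_sqrt (le_of_lt ht) hξ
            rwa [Real.sqrt_sq (by positivity)] at this
          have h3 : π * |u ξ| < (Real.sqrt t)⁻¹ := by
            rw [← inv_inv (π * |u ξ|)]
            exact inv_strictAnti₀ (by positivity) h2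
          have h4 : |u ξ| < (Real.sqrt t)⁻¹ / π := by
            rw [lt_div_iff₀ pi_pos]; nlinarith
          apply le_of_lt
          calc |u ξ| < (Real.sqrt t)⁻¹ / π := h4
            _ = (π * Real.sqrt t)⁻¹ := by rw [mul_inv]; ring
      calc σ {ξ | t < g ξ} ≤ σ {ξ | |u ξ| ≤ (π * Real.sqrt t)⁻¹} := measure_mono hsub
        _ ≤ ENNReal.ofReal (4000 * ((π * Real.sqrt t)⁻¹ / m)) :=
            slab_u _ (by positivity)
        _ = F t := by
            simp only [hFdef]
            rw [Set.indicator_of_mem (Set.mem_Ioo.mpr ⟨ht, htT⟩)]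
    · have hempty : {ξ : sphere (0 : EuclideanSpace ℝ (Fin (n+2))) 1 | t < g ξ} = ∅ := by
        ext ξ
        simp only [Set.mem_setOf_eq, Set.mem_empty_iff_false, iff_false, not_lt]
        exact le_trans (hg_le ξ) htT
      rw [hempty, measure_empty]
      exact zero_le
  have step5 : ∫⁻ t in Set.Ioi (0:ℝ), σ {ξ | t < g ξ} ≤ ∫⁻ t in Set.Ioi (0:ℝ), F t := by
    apply lintegral_mono_ae
    filter_upwards [ae_restrict_mem measurableSet_Ioi] with t ht
    exact step4 t ht
  -- compute the integral of F
  have step6 : ∫⁻ t in Set.Ioi (0:ℝ), F t = ENNReal.ofReal (8000 * T / (π * m)) := by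
    have hX : (0:ℝ) ≤ T^2 := by positivity
    simp only [hFdef]
    rw [lintegral_indicator measurableSet_Ioo,
      Measure.restrict_restrict measurableSet_Ioo,
      Set.inter_eq_self_of_subset_left Set.Ioo_subset_Ioi_self]
    have hcong : ∫⁻ t in Set.Ioo (0:ℝ) (T^2),
        ENNReal.ofReal (4000 * ((π * Real.sqrt t)⁻¹ / m))
        = ∫⁻ t in Set.Ioo (0:ℝ) (T^2),
            ENNReal.ofReal ((4000 / (π * m)) * t ^ (-(1/2) : ℝ)) := by
      apply setLIntegral_congr_fun measurableSet_Ioo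
      intro t ht
      dsimp only
      congr 1
      have ht0 : 0 < t := ht.1
      have hst : 0 < Real.sqrt t := Real.sqrt_pos.mpr ht0
      have hrw : t ^ (-(1/2) : ℝ) = (Real.sqrt t)⁻¹ := by
        rw [Real.rpow_neg ht0.le, Real.sqrt_eq_rpow]
      rw [hrw]
      field_simp
    rw [hcong]
    have hint : IntegrableOn (fun t : ℝ => (4000 / (π * m)) * t ^ (-(1/2) : ℝ))
        (Set.Ioo (0:ℝ) (T^2)) volume := by
      have hii : IntervalIntegrable (fun t : ℝ => t ^ (-(1/2) : ℝ)) volume 0 (T^2) :=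
        intervalIntegral.intervalIntegrable_rpow' (by norm_num)
      have h1 : IntegrableOn (fun t : ℝ => t ^ (-(1/2) : ℝ)) (Set.Ioc (0:ℝ) (T^2)) volume := by
        have := hii.1
        simpa using this
      exact (h1.mono_set Set.Ioo_subset_Ioc_self).const_mul _
    have hnn : 0 ≤ᵐ[volume.restrict (Set.Ioo (0:ℝ) (T^2))]
        fun t : ℝ => (4000 / (π * m)) * t ^ (-(1/2) : ℝ) := by
      filter_upwards [ae_restrict_mem measurableSet_Ioo] with t ht
      exact mul_nonneg (by positivity) (Real.rpow_nonneg ht.1.le _)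
    rw [← ofReal_integral_eq_lintegral_ofReal hint hnn]
    congr 1
    rw [← MeasureTheory.integral_Ioc_eq_integral_Ioo,
      ← intervalIntegral.integral_of_le hX, intervalIntegral.integral_const_mul,
      integral_rpow (Or.inl (by norm_num))]
    have h0r : (0:ℝ) ^ (-(1/2) + 1 : ℝ) = 0 := Real.zero_rpow (by norm_num)
    have hTr : ((T^2 : ℝ)) ^ (-(1/2) + 1 : ℝ) = T := by
      rw [show (-(1/2) + 1 : ℝ) = 1/2 by norm_num, ← Real.rpow_natCast T 2,
        ← Real.rpow_mul hT0.le]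
      norm_num
    rw [h0r, hTr]
    field_simp
    ring
  -- conclude
  have hfin : (8000:ℝ) * T / (π * m) ≤ 8000 * T / m := by
    apply div_le_div_of_nonneg_left (by positivity) hm
    nlinarith [pi_gt_three]
  have key : ∫ ξ, g ξ ∂σ ≤ 8000 * T / (π * m) := by
    rw [step2]
    have : ∫⁻ ξ, ENNReal.ofReal (g ξ) ∂σ ≤ ENNReal.ofReal (8000 * T / (π * m)) := by
      rw [step3, ← step6]; exact step5
    calc (∫⁻ ξ, ENNReal.ofReal (g ξ) ∂σ).toReal
        ≤ (ENNReal.ofReal (8000 * T / (π * m))).toReal :=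
          ENNReal.toReal_mono ENNReal.ofReal_ne_top this
      _ = 8000 * T / (π * m) := ENNReal.toReal_ofReal (by positivity)
  calc _ ≤ ∫ ξ, g ξ ∂σ := step1
    _ ≤ 8000 * T / (π * m) := key
    _ ≤ 8000 * T / m := hfin
end

section
/- If ψ = Σ_{k ∈ Z², ‖k‖² = n} c_k e^{2πi k·x} with Σ |c_k|² = 1, then ∫_{T²} |ψ|⁴ dx = Σ_{m ∈ Z²} |Σ_{‖k‖²=‖m−k‖²=n} c_k c_{m−k}|² ≤ 3, using that for each m ∈ Z² there are at most 2 lattice points k with ‖k‖² = n and ‖m−k‖² = n when m ≠ 0. -/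
open MeasureTheory Real

/-- A fundamental domain for the torus `𝕋² = ℝ²/ℤ²`. -/
def torusBox2 : Set (Fin 2 → ℝ) := Set.Icc 0 1

noncomputable def eChar (k : Fin 2 → ℤ) (x : Fin 2 → ℝ) : ℂ :=
  Complex.exp ((2 * π * Complex.I) * ((k 0 : ℂ) * (x 0 : ℂ) + (k 1 : ℂ) * (x 1 : ℂ)))

lemma eChar_mul (k l : Fin 2 → ℤ) (x : Fin 2 → ℝ) :
    eChar k x * eChar l x = eChar (k + l) x := by
  rw [eChar, eChar, eChar, ← Complex.exp_add]
  congr 1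
  push_cast [Pi.add_apply]
  ring

lemma eChar_conj (k : Fin 2 → ℤ) (x : Fin 2 → ℝ) :
    (starRingEnd ℂ) (eChar k x) = eChar (-k) x := by
  rw [eChar, eChar, ← Complex.exp_conj]
  congr 1
  simp only [map_mul, map_add, Complex.conj_I, map_ofNat, Complex.conj_ofReal, map_intCast,
    Pi.neg_apply]
  push_cast
  ring

lemma eChar_continuous (k : Fin 2 → ℤ) : Continuous (eChar k) := by
  unfold eChar
  fun_prop

lemma integral_Icc01_exp (j : ℤ) :
    (∫ t in Set.Icc (0:ℝ) 1, Complex.exp ((2 * π * Complex.I) * j * t)) =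
      if j = 0 then 1 else 0 := by
  rw [integral_Icc_eq_integral_Ioc, ← intervalIntegral.integral_of_le zero_le_one]
  rcases eq_or_ne j 0 with hj | hj
  · simp [hj]
  · rw [if_neg hj]
    have hc : (2 * π * Complex.I) * j ≠ 0 := by
      simp [Real.pi_ne_zero, Complex.I_ne_zero, hj]
    rw [integral_exp_mul_complex hc]
    have h1 : ((2 * π * Complex.I) * j) * (1:ℝ) = j * (2 * π * Complex.I) := by
      push_cast; ring
    have h0 : ((2 * π * Complex.I) * j) * (0:ℝ) = 0 := by push_cast; ring
    rw [h1, h0, Complex.exp_int_mul_two_pi_mul_I, Complex.exp_zero, sub_self, zero_div]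

lemma integral_box_eChar (m : Fin 2 → ℤ) :
    (∫ x in torusBox2, eChar m x) = if m = 0 then 1 else 0 := by
  have hsplit : ∀ x : Fin 2 → ℝ, eChar m x =
      ∏ i : Fin 2, Complex.exp ((2 * π * Complex.I) * (m i) * (x i)) := by
    intro x
    rw [Fin.prod_univ_two, ← Complex.exp_add, eChar]
    congr 1
    ring
  rw [torusBox2, ← MeasureTheory.integral_indicator measurableSet_Icc]
  have hind : ∀ x : Fin 2 → ℝ, (Set.Icc (0:(Fin 2 → ℝ)) 1).indicator (eChar m) x =
      ∏ i : Fin 2, (Set.Icc (0:ℝ) 1).indicator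
        (fun t => Complex.exp ((2 * π * Complex.I) * (m i) * t)) (x i) := by
    intro x
    by_cases hx : x ∈ Set.Icc (0:(Fin 2 → ℝ)) 1
    · have hxi : ∀ i, x i ∈ Set.Icc (0:ℝ) 1 := by
        intro i
        exact ⟨hx.1 i, hx.2 i⟩
      rw [Set.indicator_of_mem hx, hsplit]
      exact Finset.prod_congr rfl fun i _ => (Set.indicator_of_mem (hxi i)
        (fun t => Complex.exp ((2 * π * Complex.I) * (m i) * t))).symm
    · rw [Set.indicator_of_notMem hx]
      have : ∃ i, x i ∉ Set.Icc (0:ℝ) 1 := by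
        by_contra h
        push_neg at h
        exact hx ⟨fun i => (h i).1, fun i => (h i).2⟩
      obtain ⟨i, hi⟩ := this
      exact (Finset.prod_eq_zero (Finset.mem_univ i) (Set.indicator_of_notMem hi _)).symm
  rw [integral_congr_ae (Filter.Eventually.of_forall hind)]
  rw [MeasureTheory.volume_pi, MeasureTheory.integral_fintype_prod_eq_prod (ι := Fin 2)
    (f := fun i => (Set.Icc (0:ℝ) 1).indicator
      (fun t => Complex.exp ((2 * π * Complex.I) * (m i) * t)))]
  simp_rw [MeasureTheory.integral_indicator measurableSet_Icc, integral_Icc01_exp]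
  rw [Fin.prod_univ_two]
  rcases eq_or_ne m 0 with hm | hm
  · simp [hm]
  · have : m 0 ≠ 0 ∨ m 1 ≠ 0 := by
      by_contra h
      push_neg at h
      exact hm (funext fun i => by fin_cases i <;> simp [h.1, h.2])
    rw [if_neg hm]
    rcases this with h | h <;> simp [h]

set_option maxHeartbeats 1000000 in
lemma three_pt (n m0 m1 a0 a1 b0 b1 c0 c1 : ℤ) (hm : m0 ≠ 0 ∨ m1 ≠ 0)
    (ha : a0^2 + a1^2 = n) (hb : b0^2 + b1^2 = n) (hc : c0^2 + c1^2 = n)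
    (ha' : (m0 - a0)^2 + (m1 - a1)^2 = n) (hb' : (m0 - b0)^2 + (m1 - b1)^2 = n)
    (hc' : (m0 - c0)^2 + (m1 - c1)^2 = n)
    (hab : ¬(b0 = a0 ∧ b1 = a1)) (hac : ¬(c0 = a0 ∧ c1 = a1)) :
    b0 = c0 ∧ b1 = c1 := by
  have hvm2 : 2*((b0 - a0) * m0) + 2*((b1 - a1) * m1) = 0 := by
    linear_combination hb - hb' - ha + ha'
  have hvm : (b0 - a0) * m0 + (b1 - a1) * m1 = 0 := by linarith
  have hwm2 : 2*((c0 - a0) * m0) + 2*((c1 - a1) * m1) = 0 := by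
    linear_combination hc - hc' - ha + ha'
  have hwm : (c0 - a0) * m0 + (c1 - a1) * m1 = 0 := by linarith
  have hcross : (b0 - a0) * (c1 - a1) - (b1 - a1) * (c0 - a0) = 0 := by
    rcases hm with h | h
    · have h2 : ((b0 - a0) * (c1 - a1) - (b1 - a1) * (c0 - a0)) * m0 = 0 := by
        linear_combination (c1 - a1) * hvm - (b1 - a1) * hwm
      exact (mul_eq_zero.mp h2).resolve_right h
    · have h2 : ((b0 - a0) * (c1 - a1) - (b1 - a1) * (c0 - a0)) * m1 = 0 := by
        linear_combination (b0 - a0) * hwm - (c0 - a0) * hvm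
      exact (mul_eq_zero.mp h2).resolve_right h
  have hav : 2*a0*(b0 - a0) + 2*a1*(b1 - a1) + (b0 - a0)^2 + (b1 - a1)^2 = 0 := by
    linear_combination hb - ha
  have haw : 2*a0*(c0 - a0) + 2*a1*(c1 - a1) + (c0 - a0)^2 + (c1 - a1)^2 = 0 := by
    linear_combination hc - ha
  have hvpos : 0 < (b0 - a0)^2 + (b1 - a1)^2 := by
    rcases (show b0 - a0 ≠ 0 ∨ b1 - a1 ≠ 0 by
      by_contra h; push_neg at h
      exact hab ⟨by linarith [h.1], by linarith [h.2]⟩) with h | h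
    · nlinarith [sq_nonneg (b1 - a1), sq_pos_of_ne_zero h]
    · nlinarith [sq_nonneg (b0 - a0), sq_pos_of_ne_zero h]
  have hwpos : 0 < (c0 - a0)^2 + (c1 - a1)^2 := by
    rcases (show c0 - a0 ≠ 0 ∨ c1 - a1 ≠ 0 by
      by_contra h; push_neg at h
      exact hac ⟨by linarith [h.1], by linarith [h.2]⟩) with h | h
    · nlinarith [sq_nonneg (c1 - a1), sq_pos_of_ne_zero h]
    · nlinarith [sq_nonneg (c0 - a0), sq_pos_of_ne_zero h]
  have key1 : ((b0 - a0)^2 + (b1 - a1)^2) *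
      (((c0 - a0)^2 + (c1 - a1)^2) - ((b0 - a0)*(c0 - a0) + (b1 - a1)*(c1 - a1))) = 0 := by
    linear_combination ((b0 - a0)^2 + (b1 - a1)^2) * haw
      - ((b0 - a0)*(c0 - a0) + (b1 - a1)*(c1 - a1)) * hav
      + (2*(a0*(b1 - a1) - a1*(b0 - a0))) * hcross
  have key2 : ((c0 - a0)^2 + (c1 - a1)^2) *
      (((b0 - a0)^2 + (b1 - a1)^2) - ((b0 - a0)*(c0 - a0) + (b1 - a1)*(c1 - a1))) = 0 := by
    linear_combination ((c0 - a0)^2 + (c1 - a1)^2) * hav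
      - ((b0 - a0)*(c0 - a0) + (b1 - a1)*(c1 - a1)) * haw
      - (2*(a0*(c1 - a1) - a1*(c0 - a0))) * hcross
  have e1 : (c0 - a0)^2 + (c1 - a1)^2 = (b0 - a0)*(c0 - a0) + (b1 - a1)*(c1 - a1) :=
    sub_eq_zero.mp ((mul_eq_zero.mp key1).resolve_left (ne_of_gt hvpos))
  have e2 : (b0 - a0)^2 + (b1 - a1)^2 = (b0 - a0)*(c0 - a0) + (b1 - a1)*(c1 - a1) :=
    sub_eq_zero.mp ((mul_eq_zero.mp key2).resolve_left (ne_of_gt hwpos))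
  have hz : (b0 - c0)^2 + (b1 - c1)^2 = 0 := by linear_combination e1 + e2
  have h1 : (b0 - c0)^2 = 0 :=
    le_antisymm (by nlinarith [sq_nonneg (b1 - c1)]) (sq_nonneg _)
  have h2 : (b1 - c1)^2 = 0 :=
    le_antisymm (by nlinarith [sq_nonneg (b0 - c0)]) (sq_nonneg _)
  constructor
  · have := sub_eq_zero.mp (pow_eq_zero_iff two_ne_zero |>.mp h1)
    linarith
  · have := sub_eq_zero.mp (pow_eq_zero_iff two_ne_zero |>.mp h2)
    linarith

lemma pair_eq (a b : Fin 2 → ℤ) (h0 : a 0 = b 0) (h1 : a 1 = b 1) : a = b := by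
  funext i; fin_cases i <;> assumption

lemma filter_card_le_two (n : ℤ) (m : Fin 2 → ℤ) (hm : m ≠ 0) (s : Finset (Fin 2 → ℤ))
    (hs : ∀ k ∈ s, (k 0)^2 + (k 1)^2 = n ∧ (m 0 - k 0)^2 + (m 1 - k 1)^2 = n) :
    s.card ≤ 2 := by
  by_contra h
  push_neg at h
  obtain ⟨a, b, c, haM, hbM, hcM, hab, hac, hbc⟩ := Finset.two_lt_card_iff.mp h
  have hm' : m 0 ≠ 0 ∨ m 1 ≠ 0 := by
    by_contra h'
    push_neg at h'
    exact hm (pair_eq m 0 h'.1 h'.2)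
  obtain ⟨h0, h1⟩ := three_pt n (m 0) (m 1) (a 0) (a 1) (b 0) (b 1) (c 0) (c 1) hm'
    (hs a haM).1 (hs b hbM).1 (hs c hcM).1 (hs a haM).2 (hs b hbM).2 (hs c hcM).2
    (fun hh => hab (pair_eq a b hh.1.symm hh.2.symm))
    (fun hh => hac (pair_eq a c hh.1.symm hh.2.symm))
  exact hbc (pair_eq b c h0 h1)

set_option maxHeartbeats 2000000 in
/-- if `ψ = Σ_{‖k‖²=n} c_k e^{2πik·x}` with `Σ|c_k|² = 1`, then
`∫_{𝕋²}|ψ|⁴ = Σ_m |Σ_{‖k‖²=‖m−k‖²=n} c_k c_{m−k}|² ≤ 3`. -/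
theorem stmt_14 (n : ℤ) (c : (Fin 2 → ℤ) → ℂ)
    (hfin : (Function.support c).Finite)
    (hsupp : ∀ k : Fin 2 → ℤ, c k ≠ 0 → (k 0) ^ 2 + (k 1) ^ 2 = n)
    (hnorm : (∑' k : Fin 2 → ℤ, ‖c k‖ ^ 2) = 1)
    (ψ : (Fin 2 → ℝ) → ℂ)
    (hψ : ∀ x, ψ x = ∑' k : Fin 2 → ℤ,
      c k * Complex.exp ((2 * π * Complex.I) * ((k 0 : ℂ) * (x 0 : ℂ) + (k 1 : ℂ) * (x 1 : ℂ)))) :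
    (∫ x in torusBox2, ‖ψ x‖ ^ 4)
        = (∑' m : Fin 2 → ℤ,
            ‖∑' k : Fin 2 → ℤ,
                (if (k 0) ^ 2 + (k 1) ^ 2 = n ∧ (m 0 - k 0) ^ 2 + (m 1 - k 1) ^ 2 = n then
                  c k * c (m - k) else 0)‖ ^ 2) ∧
      (∑' m : Fin 2 → ℤ,
          ‖∑' k : Fin 2 → ℤ,
              (if (k 0) ^ 2 + (k 1) ^ 2 = n ∧ (m 0 - k 0) ^ 2 + (m 1 - k 1) ^ 2 = n then
                c k * c (m - k) else 0)‖ ^ 2) ≤ 3 := by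
  classical
  open Pointwise in
  set S : Finset (Fin 2 → ℤ) := hfin.toFinset with hSdef
  have hSmem : ∀ k, c k ≠ 0 → k ∈ S := fun k hk => hfin.mem_toFinset.mpr hk
  have hSzero : ∀ k, k ∉ S → c k = 0 := fun k hk => by
    by_contra h; exact hk (hSmem k h)
  have hnorm' : ∑ k ∈ S, ‖c k‖ ^ 2 = 1 := by
    rw [← hnorm]
    exact (tsum_eq_sum (fun k hk => by rw [hSzero k hk]; simp)).symm
  have hle1 : ∀ A : Finset (Fin 2 → ℤ), (∑ k ∈ A, ‖c k‖ ^ 2) ≤ 1 := by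
    intro A
    rw [← hnorm']
    calc ∑ k ∈ A, ‖c k‖ ^ 2 = ∑ k ∈ A ∩ S, ‖c k‖ ^ 2 :=
        (Finset.sum_subset Finset.inter_subset_left (fun x hx hx' => by
          rw [hSzero x (fun hxS => hx' (Finset.mem_inter.mpr ⟨hx, hxS⟩))]; simp)).symm
      _ ≤ ∑ k ∈ S, ‖c k‖ ^ 2 :=
        Finset.sum_le_sum_of_subset_of_nonneg Finset.inter_subset_right
          (fun i _ _ => by positivity)
  set T : Finset (Fin 2 → ℤ) := S + S with hTdef
  set a : (Fin 2 → ℤ) → ℂ := fun m => ∑ k ∈ S, c k * c (m - k) with hadef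
  have hite : ∀ (m k : Fin 2 → ℤ),
      (if (k 0) ^ 2 + (k 1) ^ 2 = n ∧ (m 0 - k 0) ^ 2 + (m 1 - k 1) ^ 2 = n then
        c k * c (m - k) else 0) = c k * c (m - k) := by
    intro m k
    split_ifs with h
    · rfl
    · rcases eq_or_ne (c k) 0 with hk | hk
      · rw [hk, zero_mul]
      rcases eq_or_ne (c (m - k)) 0 with hmk | hmk
      · rw [hmk, mul_zero]
      exact absurd ⟨hsupp k hk, by simpa [Pi.sub_apply] using hsupp (m - k) hmk⟩ h
  have hinner : ∀ m : Fin 2 → ℤ, (∑' k : Fin 2 → ℤ,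
      (if (k 0) ^ 2 + (k 1) ^ 2 = n ∧ (m 0 - k 0) ^ 2 + (m 1 - k 1) ^ 2 = n then
        c k * c (m - k) else 0)) = a m := by
    intro m
    rw [tsum_congr (fun k => hite m k)]
    exact tsum_eq_sum (fun k hk => by rw [hSzero k hk, zero_mul])
  have hTmem : ∀ m, a m ≠ 0 → m ∈ T := by
    intro m hma
    obtain ⟨k, hk, hne⟩ : ∃ k ∈ S, c k * c (m - k) ≠ 0 := by
      by_contra h
      push_neg at h
      exact hma (Finset.sum_eq_zero h)
    have h2 : m - k ∈ S := hSmem _ (right_ne_zero_of_mul hne)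
    have h3 : k + (m - k) ∈ S + S := Finset.add_mem_add hk h2
    simpa [add_sub_cancel] using h3
  have houter : (∑' m : Fin 2 → ℤ,
      ‖∑' k : Fin 2 → ℤ,
          (if (k 0) ^ 2 + (k 1) ^ 2 = n ∧ (m 0 - k 0) ^ 2 + (m 1 - k 1) ^ 2 = n then
            c k * c (m - k) else 0)‖ ^ 2) = ∑ m ∈ T, ‖a m‖ ^ 2 := by
    rw [tsum_congr (fun m => by rw [hinner m])]
    refine tsum_eq_sum (fun m hm => ?_)
    have : a m = 0 := by
      by_contra h; exact hm (hTmem m h)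
    rw [this]
    simp
  have hψS : ∀ x, ψ x = ∑ k ∈ S, c k * eChar k x := by
    intro x
    rw [hψ x]
    exact tsum_eq_sum (fun k hk => by rw [hSzero k hk, zero_mul])
  set G : (Fin 2 → ℝ) → ℂ := fun x => ∑ m ∈ T, a m * eChar m x with hGdef
  have hF : ∀ x, (ψ x) ^ 2 = G x := by
    intro x
    rw [hψS x, sq, Finset.sum_mul_sum]
    calc ∑ k ∈ S, ∑ l ∈ S, (c k * eChar k x) * (c l * eChar l x)
        = ∑ k ∈ S, ∑ m ∈ T, c k * c (m - k) * eChar m x := by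
          refine Finset.sum_congr rfl fun k hk => ?_
          have step1 : ∑ l ∈ S, (c k * eChar k x) * (c l * eChar l x)
              = ∑ l ∈ S, c k * c ((k + l) - k) * eChar (k + l) x := by
            refine Finset.sum_congr rfl fun l hl => ?_
            rw [add_sub_cancel_left, ← eChar_mul]
            ring
          rw [step1,
            show (∑ l ∈ S, c k * c ((k + l) - k) * eChar (k + l) x)
              = ∑ m ∈ S.image (fun l => k + l), c k * c (m - k) * eChar m x from
            (Finset.sum_image (g := fun l => k + l) (s := S)
              (f := fun m => c k * c (m - k) * eChar m x)
              (fun x1 _ x2 _ h => by exact add_left_cancel h)).symm]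
          refine Finset.sum_subset ?_ ?_
          · intro m hmem
            obtain ⟨l, hl, rfl⟩ := Finset.mem_image.mp hmem
            exact Finset.add_mem_add hk hl
          · intro m hmT hmI
            have hc0 : c (m - k) = 0 := by
              by_contra h
              exact hmI (Finset.mem_image.mpr ⟨m - k, hSmem _ h, by abel⟩)
            rw [hc0]
            ring
        _ = ∑ m ∈ T, a m * eChar m x := by
          rw [Finset.sum_comm]
          refine Finset.sum_congr rfl fun m _ => ?_
          rw [hadef]
          exact (Finset.sum_mul _ _ _).symm
  have hGcont : Continuous G := by
    rw [hGdef]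
    exact continuous_finset_sum _ fun m _ => continuous_const.mul (eChar_continuous m)
  have hIntOn : ∀ f : (Fin 2 → ℝ) → ℂ, Continuous f → IntegrableOn f torusBox2 := by
    intro f hf
    exact hf.continuousOn.integrableOn_compact (isCompact_Icc)
  have hexp : ∀ x, G x * (starRingEnd ℂ) (G x)
      = ∑ m ∈ T, ∑ m' ∈ T, (a m * (starRingEnd ℂ) (a m')) * eChar (m - m') x := by
    intro x
    rw [hGdef]
    simp only [map_sum, map_mul, Finset.sum_mul_sum]
    refine Finset.sum_congr rfl fun m _ => Finset.sum_congr rfl fun m' _ => ?_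
    rw [eChar_conj]
    calc (a m * eChar m x) * ((starRingEnd ℂ) (a m') * eChar (-m') x)
        = (a m * (starRingEnd ℂ) (a m')) * (eChar m x * eChar (-m') x) := by ring
      _ = (a m * (starRingEnd ℂ) (a m')) * eChar (m - m') x := by
          rw [eChar_mul, ← sub_eq_add_neg]
  have hParseval : (∫ x in torusBox2, G x * (starRingEnd ℂ) (G x))
      = ∑ m ∈ T, ((‖a m‖ ^ 2 : ℝ) : ℂ) := by
    rw [integral_congr_ae (Filter.Eventually.of_forall hexp)]
    rw [integral_finset_sum _ (f := fun m x => ∑ m' ∈ T, (a m * (starRingEnd ℂ) (a m')) * eChar (m - m') x) (fun m _ => hIntOn _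
      (continuous_finset_sum _ fun m' _ => continuous_const.mul (eChar_continuous _)))]
    refine Finset.sum_congr rfl fun m hmT => ?_
    rw [integral_finset_sum _ (f := fun m' x => (a m * (starRingEnd ℂ) (a m')) * eChar (m - m') x) (fun m' _ => hIntOn _
      (continuous_const.mul (eChar_continuous _)))]
    have hterm : ∀ m' ∈ T, (∫ x in torusBox2, (a m * (starRingEnd ℂ) (a m')) * eChar (m - m') x)
        = if m = m' then a m * (starRingEnd ℂ) (a m') else 0 := by
      intro m' _
      rw [MeasureTheory.integral_const_mul, integral_box_eChar]
      by_cases h : m = m'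
      · simp [h]
      · simp [h, sub_ne_zero.mpr h]
    rw [Finset.sum_congr rfl hterm, Finset.sum_ite_eq T m
      (fun m' => a m * (starRingEnd ℂ) (a m')), if_pos hmT, Complex.mul_conj,
      Complex.normSq_eq_norm_sq]
  have hmain : (∫ x in torusBox2, ‖ψ x‖ ^ 4) = ∑ m ∈ T, ‖a m‖ ^ 2 := by
    have h4 : ∀ x, (‖ψ x‖ ^ 4 : ℝ) = (G x * (starRingEnd ℂ) (G x)).re := by
      intro x
      rw [← hF x, Complex.mul_conj, Complex.ofReal_re, Complex.normSq_eq_norm_sq,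
        norm_pow]
      ring
    rw [integral_congr_ae (Filter.Eventually.of_forall h4)]
    have hint : IntegrableOn (fun x => G x * (starRingEnd ℂ) (G x)) torusBox2 :=
      hIntOn _ (hGcont.mul ((RCLike.continuous_conj (K := ℂ)).comp hGcont))
    calc (∫ x in torusBox2, (G x * (starRingEnd ℂ) (G x)).re)
        = (∫ x in torusBox2, G x * (starRingEnd ℂ) (G x)).re := by
          have h := integral_re hint
          simp only [RCLike.re_to_complex] at h
          exact h
      _ = (∑ m ∈ T, ((‖a m‖ ^ 2 : ℝ) : ℂ)).re := by rw [hParseval]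
      _ = ∑ m ∈ T, ‖a m‖ ^ 2 := by
          rw [← Complex.ofReal_sum, Complex.ofReal_re]
  refine ⟨by rw [houter, hmain], ?_⟩
  rw [houter]
  -- bound ‖a 0‖² ≤ 1
  have ha0 : ‖a 0‖ ^ 2 ≤ 1 := by
    have h1 : ‖a 0‖ ≤ ∑ k ∈ S, ‖c k‖ * ‖c ((0 : Fin 2 → ℤ) - k)‖ := by
      rw [hadef]
      exact (norm_sum_le _ _).trans
        (le_of_eq (Finset.sum_congr rfl fun k _ => norm_mul _ _))
    have h3 : ∑ k ∈ S, ‖c ((0 : Fin 2 → ℤ) - k)‖ ^ 2 ≤ 1 := by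
      rw [show (∑ k ∈ S, ‖c ((0 : Fin 2 → ℤ) - k)‖ ^ 2)
          = ∑ j ∈ S.image (fun k => (0 : Fin 2 → ℤ) - k), ‖c j‖ ^ 2 from
        (Finset.sum_image (g := fun k => (0 : Fin 2 → ℤ) - k) (s := S)
          (f := fun j => ‖c j‖ ^ 2) (fun x1 _ x2 _ h => by simpa using h)).symm]
      exact hle1 _
    calc ‖a 0‖ ^ 2 ≤ (∑ k ∈ S, ‖c k‖ * ‖c ((0 : Fin 2 → ℤ) - k)‖) ^ 2 :=
          pow_le_pow_left₀ (norm_nonneg _) h1 2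
      _ ≤ (∑ k ∈ S, ‖c k‖ ^ 2) * (∑ k ∈ S, ‖c ((0 : Fin 2 → ℤ) - k)‖ ^ 2) :=
          Finset.sum_mul_sq_le_sq_mul_sq S _ _
      _ ≤ 1 := by
          rw [hnorm', one_mul]
          exact h3
  have hm2 : ∀ m ∈ T.erase 0, ‖a m‖ ^ 2 ≤ 2 * ∑ k ∈ S, ‖c k‖ ^ 2 * ‖c (m - k)‖ ^ 2 := by
    intro m hmT
    have hm0 : m ≠ 0 := (Finset.mem_erase.mp hmT).1
    set K := S.filter (fun k => (k 0) ^ 2 + (k 1) ^ 2 = n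
      ∧ (m 0 - k 0) ^ 2 + (m 1 - k 1) ^ 2 = n) with hKdef
    have haK : a m = ∑ k ∈ K, c k * c (m - k) := by
      rw [hadef, hKdef]
      exact (Finset.sum_filter_of_ne (fun k hk hne =>
        ⟨hsupp k (left_ne_zero_of_mul hne), by
          simpa [Pi.sub_apply] using hsupp (m - k) (right_ne_zero_of_mul hne)⟩)).symm
    have hcard : K.card ≤ 2 := filter_card_le_two n m hm0 K
      (fun k hk => (Finset.mem_filter.mp hk).2)
    have h1 : ‖a m‖ ≤ ∑ k ∈ K, ‖c k‖ * ‖c (m - k)‖ := by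
      rw [haK]
      exact (norm_sum_le _ _).trans
        (le_of_eq (Finset.sum_congr rfl fun k _ => norm_mul _ _))
    have h2 : (∑ k ∈ K, ‖c k‖ * ‖c (m - k)‖) ^ 2
        ≤ (K.card : ℝ) * ∑ k ∈ K, (‖c k‖ * ‖c (m - k)‖) ^ 2 := by
      have h := Finset.sum_mul_sq_le_sq_mul_sq K (fun _ => (1 : ℝ))
        (fun k => ‖c k‖ * ‖c (m - k)‖)
      simpa using h
    calc ‖a m‖ ^ 2 ≤ (∑ k ∈ K, ‖c k‖ * ‖c (m - k)‖) ^ 2 :=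
          pow_le_pow_left₀ (norm_nonneg _) h1 2
      _ ≤ (K.card : ℝ) * ∑ k ∈ K, (‖c k‖ * ‖c (m - k)‖) ^ 2 := h2
      _ ≤ 2 * ∑ k ∈ K, (‖c k‖ * ‖c (m - k)‖) ^ 2 := by
          refine mul_le_mul_of_nonneg_right ?_ (Finset.sum_nonneg fun k _ => sq_nonneg _)
          exact_mod_cast hcard
      _ ≤ 2 * ∑ k ∈ S, ‖c k‖ ^ 2 * ‖c (m - k)‖ ^ 2 := by
          refine mul_le_mul_of_nonneg_left ?_ (by norm_num)
          refine le_trans (le_of_eq (Finset.sum_congr rfl fun k _ => mul_pow _ _ _)) ?_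
          exact Finset.sum_le_sum_of_subset_of_nonneg (Finset.filter_subset _ _)
            (fun i _ _ => by positivity)
  have hsum2 : ∑ m ∈ T.erase 0, ‖a m‖ ^ 2 ≤ 2 := by
    calc ∑ m ∈ T.erase 0, ‖a m‖ ^ 2
        ≤ ∑ m ∈ T.erase 0, 2 * ∑ k ∈ S, ‖c k‖ ^ 2 * ‖c (m - k)‖ ^ 2 :=
          Finset.sum_le_sum hm2
      _ = 2 * ∑ k ∈ S, ‖c k‖ ^ 2 * ∑ m ∈ T.erase 0, ‖c (m - k)‖ ^ 2 := by
          rw [← Finset.mul_sum, Finset.sum_comm]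
          congr 1
          exact Finset.sum_congr rfl fun k _ => (Finset.mul_sum _ _ _).symm
      _ ≤ 2 * ∑ k ∈ S, ‖c k‖ ^ 2 * 1 := by
          refine mul_le_mul_of_nonneg_left (Finset.sum_le_sum fun k _ => ?_) (by norm_num)
          refine mul_le_mul_of_nonneg_left ?_ (sq_nonneg _)
          rw [show (∑ m ∈ T.erase 0, ‖c (m - k)‖ ^ 2)
              = ∑ j ∈ (T.erase 0).image (fun m => m - k), ‖c j‖ ^ 2 from
            (Finset.sum_image (g := fun m => m - k) (s := T.erase 0)
              (f := fun j => ‖c j‖ ^ 2) (fun x1 _ x2 _ h => by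
              exact sub_left_injective h)).symm]
          exact hle1 _
      _ = 2 := by
          rw [show (∑ k ∈ S, ‖c k‖ ^ 2 * 1) = ∑ k ∈ S, ‖c k‖ ^ 2 from
            Finset.sum_congr rfl fun k _ => mul_one _, hnorm']
          norm_num
  calc ∑ m ∈ T, ‖a m‖ ^ 2 ≤ ∑ m ∈ insert 0 T, ‖a m‖ ^ 2 :=
        Finset.sum_le_sum_of_subset_of_nonneg (Finset.subset_insert _ _)
          (fun i _ _ => sq_nonneg _)
    _ = ∑ m ∈ (insert 0 T).erase 0, ‖a m‖ ^ 2 + ‖a 0‖ ^ 2 :=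
        (Finset.sum_erase_add _ _ (Finset.mem_insert_self _ _)).symm
    _ = ∑ m ∈ T.erase 0, ‖a m‖ ^ 2 + ‖a 0‖ ^ 2 := by
        rw [Finset.erase_insert_eq_erase]
    _ ≤ 2 + 1 := add_le_add hsum2 ha0
    _ = 3 := by norm_num
end
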